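/- For every real z < 0, the Mills-type ratio satisfies the upper bound φ(z)/Φ(z) < (√(z²+4) − z)/2, where φ and Φ are the PDF and CDF of the standard normal distribution. -/

import Mathlib

open Real MeasureTheory Set Filter Topology

noncomputable def stdPhi (z : ℝ) : ℝ := (Real.sqrt (2 * Real.pi))⁻¹ * Real.exp (-z ^ 2 / 2)

noncomputable def stdCDF (z : ℝ) : ℝ := ∫ t in Set.Iic z, stdPhi t

noncomputable def hFun (t : ℝ) : ℝ := (Real.sqrt (t ^ 2 + 4) + t) / 2

lemma s_pos (t : ℝ) : 0 < Real.sqrt (t ^ 2 + 4) := Real.sqrt_pos.2 (by positivity)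

lemma s_sq (t : ℝ) : Real.sqrt (t ^ 2 + 4) ^ 2 = t ^ 2 + 4 := Real.sq_sqrt (by positivity)

lemma hFun_pos (t : ℝ) : 0 < hFun t := by
  have h1 := s_pos t
  have h2 := s_sq t
  unfold hFun
  nlinarith [sq_nonneg (Real.sqrt (t ^ 2 + 4) + t)]

lemma hFun_le_one {t : ℝ} (ht : t ≤ 0) : hFun t ≤ 1 := by
  have h := Real.sqrt_le_sqrt (show t ^ 2 + 4 ≤ (2 - t) ^ 2 by nlinarith)
  rw [Real.sqrt_sq (by linarith)] at h
  unfold hFun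
  linarith

lemma stdPhi_pos (t : ℝ) : 0 < stdPhi t := by
  unfold stdPhi
  have : 0 < Real.sqrt (2 * Real.pi) := Real.sqrt_pos.2 (by positivity)
  positivity

lemma hasDerivAt_hFun (t : ℝ) :
    HasDerivAt hFun ((t / Real.sqrt (t ^ 2 + 4) + 1) / 2) t := by
  have h1 : HasDerivAt (fun t : ℝ => t ^ 2 + 4) (2 * t) t := by
    simpa using ((hasDerivAt_pow 2 t).add_const 4)
  have h2 : HasDerivAt (fun t : ℝ => Real.sqrt (t ^ 2 + 4))
      (2 * t / (2 * Real.sqrt (t ^ 2 + 4))) t :=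
    (Real.hasDerivAt_sqrt (by positivity)).comp t h1 |>.congr_deriv (by ring)
  have h3 := (h2.add (hasDerivAt_id t)).div_const 2
  refine h3.congr_deriv ?_
  have := (s_pos t).ne'
  field_simp

lemma hasDerivAt_stdPhi (t : ℝ) : HasDerivAt stdPhi (-t * stdPhi t) t := by
  have h1 : HasDerivAt (fun t : ℝ => -t ^ 2 / 2) (-t) t := by
    have := ((hasDerivAt_pow 2 t).neg).div_const 2
    refine this.congr_deriv ?_; push_cast; ring
  have := (h1.exp).const_mul (Real.sqrt (2 * Real.pi))⁻¹
  unfold stdPhi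
  refine this.congr_deriv ?_
  ring

lemma key_ineq (t : ℝ) : (t / Real.sqrt (t ^ 2 + 4) + 1) / 2 - t * hFun t < 1 := by
  set s := Real.sqrt (t ^ 2 + 4) with hs
  have h1 : 0 < s := s_pos t
  have h2 : s ^ 2 = t ^ 2 + 4 := s_sq t
  have hA2 : (s * (1 + t ^ 2)) ^ 2 = (t * (t ^ 2 + 3)) ^ 2 + 4 := by
    rw [mul_pow, h2]; ring
  have hA : 0 < s * (1 + t ^ 2) := by positivity
  have key : 0 < s * (1 + t ^ 2) + t * (t ^ 2 + 3) := by
    by_contra h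
    push_neg at h
    nlinarith [mul_nonpos_of_nonneg_of_nonpos hA.le h,
      sq_nonneg (s * (1 + t ^ 2) + t * (t ^ 2 + 3))]
  have h2t : t * s ^ 2 = t * (t ^ 2 + 4) := by rw [h2]
  have h4 : t < s * (1 + t * s + t ^ 2) := by nlinarith [key, h2t]
  have h5 : t / s < 1 + t * s + t ^ 2 :=
    (div_lt_iff₀ h1).2 (by linarith [mul_comm s (1 + t * s + t ^ 2) ▸ h4])
  unfold hFun
  nlinarith [h5]

noncomputable def Ffun (t : ℝ) : ℝ := stdPhi t * hFun t

noncomputable def Fder (t : ℝ) : ℝ :=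
  stdPhi t * ((t / Real.sqrt (t ^ 2 + 4) + 1) / 2 - t * hFun t)

lemma hasDerivAt_Ffun (t : ℝ) : HasDerivAt Ffun (Fder t) t := by
  have := (hasDerivAt_stdPhi t).mul (hasDerivAt_hFun t)
  unfold Ffun Fder
  refine this.congr_deriv ?_
  ring

lemma Fder_lt_stdPhi (t : ℝ) : Fder t < stdPhi t := by
  have h := key_ineq t
  have := stdPhi_pos t
  unfold Fder
  nlinarith

lemma Fder_nonneg {t : ℝ} (ht : t ≤ 0) : 0 ≤ Fder t := by
  have h1 := s_pos t
  have h2 := s_sq t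
  have hdiv : -1 ≤ t / Real.sqrt (t ^ 2 + 4) := by
    rw [le_div_iff₀ h1]
    nlinarith [Real.sq_sqrt (show (0:ℝ) ≤ t ^ 2 + 4 by positivity)]
  have hh := hFun_pos t
  have hphi := (stdPhi_pos t).le
  unfold Fder
  apply mul_nonneg hphi
  nlinarith [mul_nonneg (neg_nonneg.2 ht) hh.le]

lemma continuous_stdPhi : Continuous stdPhi := by
  unfold stdPhi
  fun_prop

lemma continuous_Fder : Continuous Fder := by
  have cs : Continuous fun t : ℝ => Real.sqrt (t ^ 2 + 4) := by fun_prop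
  have cdiv : Continuous fun t : ℝ => t / Real.sqrt (t ^ 2 + 4) :=
    continuous_id.div cs fun t => (s_pos t).ne'
  have ch : Continuous hFun := by unfold hFun; fun_prop
  unfold Fder
  exact continuous_stdPhi.mul (((cdiv.add continuous_const).div_const 2).sub
    (continuous_id.mul ch))

lemma integrable_stdPhi : Integrable stdPhi := by
  have h := (integrable_exp_neg_mul_sq (show (0:ℝ) < 1/2 by norm_num)).const_mul
    (Real.sqrt (2 * Real.pi))⁻¹
  refine h.congr (Eventually.of_forall fun t => ?_)
  unfold stdPhi
  ring_nf

lemma tendsto_stdPhi_atBot : Tendsto stdPhi atBot (𝓝 0) := by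
  have h1 : Tendsto (fun t : ℝ => t ^ 2) atBot atTop := by
    have := (tendsto_pow_atTop (α := ℝ) (show (2:ℕ) ≠ 0 by norm_num)).comp tendsto_neg_atBot_atTop
    refine this.congr fun t => ?_
    simp [neg_sq]
  have h2 : Tendsto (fun t : ℝ => -t ^ 2 / 2) atBot atBot := by
    apply Tendsto.atBot_div_const (show (0:ℝ) < 2 by norm_num)
    exact tendsto_neg_atTop_atBot.comp h1
  have h3 : Tendsto (fun t : ℝ => Real.exp (-t ^ 2 / 2)) atBot (𝓝 0) :=
    Real.tendsto_exp_atBot.comp h2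
  have := h3.const_mul (Real.sqrt (2 * Real.pi))⁻¹
  rw [mul_zero] at this; exact this

lemma tendsto_Ffun_atBot : Tendsto Ffun atBot (𝓝 0) := by
  apply tendsto_of_tendsto_of_tendsto_of_le_of_le' tendsto_const_nhds tendsto_stdPhi_atBot
  · exact Eventually.of_forall fun t => (mul_pos (stdPhi_pos t) (hFun_pos t)).le
  · filter_upwards [Iic_mem_atBot (0:ℝ)] with t ht
    unfold Ffun
    nlinarith [stdPhi_pos t, hFun_le_one ht, hFun_pos t]

theorem mills_upper_bound (z : ℝ) (hz : z < 0) :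
    stdPhi z / stdCDF z < (Real.sqrt (z ^ 2 + 4) - z) / 2 := by
  have hFderInt : IntegrableOn Fder (Iic z) := by
    apply Integrable.mono' (integrable_stdPhi.integrableOn)
      continuous_Fder.aestronglyMeasurable
    filter_upwards [ae_restrict_mem measurableSet_Iic] with t ht
    rw [Real.norm_eq_abs, abs_of_nonneg (Fder_nonneg (ht.trans hz.le))]
    exact (Fder_lt_stdPhi t).le
  have hFTC : ∫ t in Iic z, Fder t = Ffun z := by
    have := integral_Iic_of_hasDerivAt_of_tendsto' (a := z)
      (fun x _ => hasDerivAt_Ffun x) hFderInt tendsto_Ffun_atBot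
    simpa using this
  have hsub : ∫ t in Iic z, (stdPhi t - Fder t) = stdCDF z - Ffun z := by
    rw [integral_sub integrable_stdPhi.integrableOn hFderInt, hFTC]
    rfl
  have hpos : 0 < ∫ t in Iic z, (stdPhi t - Fder t) := by
    rw [setIntegral_pos_iff_support_of_nonneg_ae]
    · have hsupp : Function.support (fun t => stdPhi t - Fder t) = Set.univ := by
        ext t
        simp only [Function.mem_support, Set.mem_univ, iff_true]
        exact ne_of_gt (sub_pos.2 (Fder_lt_stdPhi t))
      rw [hsupp, Set.univ_inter, Real.volume_Iic]
      exact ENNReal.zero_lt_top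
    · exact Eventually.of_forall fun t => (sub_pos.2 (Fder_lt_stdPhi t)).le
    · exact integrable_stdPhi.integrableOn.sub hFderInt
  rw [hsub] at hpos
  have hF : Ffun z < stdCDF z := by linarith
  have hFz : 0 < Ffun z := mul_pos (stdPhi_pos z) (hFun_pos z)
  have hCDF : 0 < stdCDF z := lt_trans hFz hF
  have h2 := s_sq z
  have hso := s_pos z
  rw [div_lt_iff₀ hCDF]
  have hmul : Ffun z * ((Real.sqrt (z ^ 2 + 4) - z) / 2) <
      stdCDF z * ((Real.sqrt (z ^ 2 + 4) - z) / 2) := by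
    apply mul_lt_mul_of_pos_right hF
    nlinarith
  have hid : Ffun z * ((Real.sqrt (z ^ 2 + 4) - z) / 2) = stdPhi z := by
    unfold Ffun hFun
    linear_combination (stdPhi z / 4) * h2
  calc stdPhi z = Ffun z * ((Real.sqrt (z ^ 2 + 4) - z) / 2) := hid.symm
    _ < stdCDF z * ((Real.sqrt (z ^ 2 + 4) - z) / 2) := hmul
    _ = (Real.sqrt (z ^ 2 + 4) - z) / 2 * stdCDF z := mul_comm _ _
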